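/- Let X be a countably infinite set and let E be a contraction (E(Z) ⊆ Z for every finite Z ⊆ X). If the lexicographic composition L_E preserves path independence over the class C^res of responsive choice functions, then the set function I\E, defined by (I\E)(Z) = Z \ E(Z), is cardinal: for all finite Z, Z' ⊆ X with |Z| = |Z'| and every x ∈ Z ∩ Z', x ∈ Z \ E(Z) if and only if x ∈ Z' \ E(Z'). -/

import Mathlib

/-! Common definitions: choice functions on a countably infinite set of items,
lexicographic composition subject to an exclusion function, and the various
properties from the paper. Items form a type `X`; finite subsets of `X` are
`Finset X`; set functions are maps `Finset X → Set X`. -/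

open scoped Classical

variable {X : Type*}

/-- A choice function selects a subset of its input. -/
def IsChoice (C : Finset X → Finset X) : Prop := ∀ Y, C Y ⊆ Y

/-- Lexicographic composition of `C1` and `C2` subject to the exclusion
function `E`:  `Y ↦ C1(Y) ∪ C2(Y \ E(C1(Y)))`. -/
noncomputable def lexComp (E : Finset X → Set X) (C1 C2 : Finset X → Finset X) :
    Finset X → Finset X :=
  fun Y => C1 Y ∪ C2 (Y.filter (fun y => y ∉ E (C1 Y)))

/-- Path independence: `C(Y ∪ Y') = C(C(Y) ∪ C(Y'))`. -/
def PathIndependent (C : Finset X → Finset X) : Prop :=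
  ∀ Y Y' : Finset X, C (Y ∪ Y') = C (C Y ∪ C Y')

/-- Substitutes: the rejection function is monotone. -/
def Substitutes (C : Finset X → Finset X) : Prop :=
  ∀ Y Y' : Finset X, Y ⊆ Y' → Y \ C Y ⊆ Y' \ C Y'

/-- Size monotonicity (law of aggregate demand). -/
def SizeMonotonic (C : Finset X → Finset X) : Prop :=
  ∀ Y Y' : Finset X, Y ⊆ Y' → (C Y).card ≤ (C Y').card

/-- Consistency: `C(Y') ⊆ Y ⊆ Y'` implies `C(Y) = C(Y')`. -/
def Consistent (C : Finset X → Finset X) : Prop :=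
  ∀ Y Y' : Finset X, C Y' ⊆ Y → Y ⊆ Y' → C Y = C Y'

/-- The `q` highest-ranked acceptable elements of `Y`, with respect to a linear
order `r` on `X ∪ {∅}` (modelled as `Option X`, `none` playing the role of the
outside option `∅`): `y` is chosen iff `y ≻ ∅` and fewer than `q` acceptable
elements of `Y` are ranked strictly above `y`. -/
noncomputable def topChoice (r : LinearOrder (Option X)) (q : ℕ) (Y : Finset X) : Finset X :=
  Y.filter (fun y => r.lt none (some y) ∧
    (Y.filter (fun z => r.lt none (some z) ∧ r.lt (some y) (some z))).card < q)

/-- `C` is responsive to the linear order `r` on `X ∪ {∅}` and quota `q`. -/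
def ResponsiveWith (r : LinearOrder (Option X)) (q : ℕ) (C : Finset X → Finset X) : Prop :=
  ∀ Y : Finset X, C Y = topChoice r q Y

/-- Responsive choice functions (the class `C^res`). -/
def Responsive (C : Finset X → Finset X) : Prop :=
  ∃ (r : LinearOrder (Option X)) (q : ℕ), ResponsiveWith r q C

/-- Single-valued responsive choice functions (the class `C^{sv-res}`): quota 1. -/
def SVResponsive (C : Finset X → Finset X) : Prop :=
  ∃ r : LinearOrder (Option X), ResponsiveWith r 1 C

/-- `E` is threshold-linear with cardinal reuse with respect to the parameters
`t ∈ ℕ ∪ {0,∞}`, `K ⊆ X` and the chain `∅ = T^0 ⊆ T^1 ⊆ ⋯ ⊆ T^t ⊆ X \ K`: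
for every finite `Z`, if `|Z| < t` then `E(Z) = (Z \ T^{|Z|}) ∪ K`, and
otherwise `G_E(Z) = E(Z) ∪ Z = X`. -/
def TLCRWith (E : Finset X → Set X) (t : ℕ∞) (K : Set X) (T : ℕ → Set X) : Prop :=
  T 0 = ∅ ∧ (∀ n : ℕ, (n : ℕ∞) < t → T n ⊆ T (n + 1)) ∧
  (∀ n : ℕ, (n : ℕ∞) ≤ t → T n ⊆ Kᶜ) ∧
  ∀ Z : Finset X,
    ((Z.card : ℕ∞) < t → E Z = ((Z : Set X) \ T Z.card) ∪ K) ∧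
    (¬ (Z.card : ℕ∞) < t → E Z ∪ (Z : Set X) = Set.univ)

/-- `E` is threshold-linear with cardinal reuse (for some parameters). -/
def TLCR (E : Finset X → Set X) : Prop :=
  ∃ (t : ℕ∞) (K : Set X) (T : ℕ → Set X), TLCRWith E t K T

/-- A dilation `D` is threshold-linear (with threshold `t`), where `K = D(∅)`:
`D(Z) = Z ∪ K` when `|Z| < t`, and `D(Z) = X` otherwise. -/
def ThresholdLinear (D : Finset X → Set X) : Prop :=
  ∃ t : ℕ∞, ∀ Z : Finset X,
    ((Z.card : ℕ∞) < t → D Z = (Z : Set X) ∪ D ∅) ∧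
    (¬ (Z.card : ℕ∞) < t → D Z = Set.univ)

/-- A set function `F` (valued inside its argument) is cardinal-linear:
there is a weakly increasing sequence `∅ = T^0 ⊆ T^1 ⊆ ⋯` with
`F(Z) = Z ∩ T^{|Z|}` for every finite `Z`. -/
def CardinalLinear (F : Finset X → Set X) : Prop :=
  ∃ T : ℕ → Set X, T 0 = ∅ ∧ Monotone T ∧
    ∀ Z : Finset X, F Z = (Z : Set X) ∩ T Z.card

section Equiv

variable (s : Setoid X)

/-- A finite set is feasible if it contains at most one element of each
equivalence class. -/
def Feasible (Z : Finset X) : Prop :=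
  ∀ x ∈ Z, ∀ z ∈ Z, x ≠ z → ¬ s.r x z

/-- A choice function is many-to-one if it always selects a feasible set. -/
def ManyToOne (C : Finset X → Finset X) : Prop :=
  ∀ Y : Finset X, Feasible s (C Y)

/-- `I_Z`: the union of the equivalence classes of the members of `Z`. -/
def IClass (Z : Finset X) : Set X := {y | ∃ x ∈ Z, s.r y x}

/-- `E` is equivalence-excluding: `Z ∪ E(Z) ⊇ I_Z` for every feasible `Z`. -/
def EquivExcluding (E : Finset X → Set X) : Prop :=
  ∀ Z : Finset X, Feasible s Z → IClass s Z ⊆ (Z : Set X) ∪ E Z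

/-- `Cbar` completes `C`: whenever `Cbar(Y)` is feasible, `Cbar(Y) = C(Y)`. -/
def Completes (Cbar C : Finset X → Finset X) : Prop :=
  ∀ Y : Finset X, Feasible s (Cbar Y) → Cbar Y = C Y

/-- `E` is many-to-one threshold-linear with cardinal reuse with the parameters
`t`, `K`, `{T^n}`: the displayed condition holds for every *feasible* `Z`:
if `Z ∪ K ≠ X` and `|Z| < t` then `E(Z) = (Z \ T^{|Z|}) ∪ K`, and otherwise
`G_E(Z) = X`. -/
def MtoTLCRWith (E : Finset X → Set X) (t : ℕ∞) (K : Set X) (T : ℕ → Set X) : Prop :=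
  T 0 = ∅ ∧ (∀ n : ℕ, (n : ℕ∞) < t → T n ⊆ T (n + 1)) ∧
  (∀ n : ℕ, (n : ℕ∞) ≤ t → T n ⊆ Kᶜ) ∧
  ∀ Z : Finset X, Feasible s Z →
    (((Z : Set X) ∪ K ≠ Set.univ ∧ (Z.card : ℕ∞) < t) →
      E Z = ((Z : Set X) \ T Z.card) ∪ K) ∧
    (¬ ((Z : Set X) ∪ K ≠ Set.univ ∧ (Z.card : ℕ∞) < t) →
      E Z ∪ (Z : Set X) = Set.univ)

end Equiv
lemma CPR.llt_irrefl (r : LinearOrder (Option X)) (u : Option X) : ¬ r.lt u u := by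
  intro h
  rcases (r.lt_iff_le_not_ge u u).mp h with ⟨h1, h2⟩
  exact h2 h1

lemma CPR.llt_asymm (r : LinearOrder (Option X)) {u v : Option X}
    (h : r.lt u v) (h' : r.lt v u) : False := by
  rcases (r.lt_iff_le_not_ge u v).mp h with ⟨h1, h2⟩
  rcases (r.lt_iff_le_not_ge v u).mp h' with ⟨h3, -⟩
  exact h2 h3

noncomputable def CPR.tierOrd (tier : X → ℕ) (g : X → ℕ) (hg : Function.Injective g) :
    LinearOrder (Option X) :=
  LinearOrder.lift' (fun o => toLex (o.elim 1 tier, o.elim 0 (fun z => g z + 1)))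
    (by
      intro o o' h
      have h := toLex.injective h
      simp only [Prod.mk.injEq] at h
      match o, o' with
      | none, none => rfl
      | none, some z => simp at h
      | some z, none => simp at h
      | some z, some z' =>
        simp only [Option.elim, Nat.add_right_cancel_iff] at h
        exact congrArg some (hg h.2))

lemma CPR.tierOrd_lt_iff (tier g : X → ℕ) (hg : Function.Injective g) (u v : Option X) :
    (CPR.tierOrd tier g hg).lt u v ↔
      u.elim 1 tier < v.elim 1 tier ∨
        (u.elim 1 tier = v.elim 1 tier ∧
          u.elim 0 (fun z => g z + 1) < v.elim 0 (fun z => g z + 1)) :=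
  Prod.Lex.lt_iff

lemma CPR.tierOrd_none_lt (tier g : X → ℕ) (hg : Function.Injective g) (y : X)
    (hne : tier y ≠ 1) :
    (CPR.tierOrd tier g hg).lt none (some y) ↔ 1 < tier y := by
  rw [CPR.tierOrd_lt_iff]
  simp only [Option.elim]
  omega

lemma CPR.tierOrd_some_lt (tier g : X → ℕ) (hg : Function.Injective g) {u v : X}
    (h : tier u < tier v) :
    (CPR.tierOrd tier g hg).lt (some u) (some v) := by
  rw [CPR.tierOrd_lt_iff]
  simp only [Option.elim]
  omega

lemma CPR.topChoice_under (r : LinearOrder (Option X)) (q : ℕ) (Y A : Finset X)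
    (hA : ∀ y, y ∈ A ↔ (y ∈ Y ∧ r.lt none (some y)))
    (hcard : A.card ≤ q) :
    topChoice r q Y = A := by
  ext y
  simp only [topChoice, Finset.mem_filter]
  constructor
  · rintro ⟨hy, hacc, -⟩
    exact (hA y).mpr ⟨hy, hacc⟩
  · intro hyA
    obtain ⟨hy, hacc⟩ := (hA y).mp hyA
    refine ⟨hy, hacc, ?_⟩
    have hsub : Y.filter (fun z => r.lt none (some z) ∧ r.lt (some y) (some z)) ⊆
        A.erase y := by
      intro z hz
      rw [Finset.mem_filter] at hz
      obtain ⟨hzY, hzacc, hyz⟩ := hz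
      exact Finset.mem_erase.mpr
        ⟨fun h => CPR.llt_irrefl r (some y) (h ▸ hyz), (hA z).mpr ⟨hzY, hzacc⟩⟩
    have h1 := Finset.card_le_card hsub
    have h2 := Finset.card_erase_of_mem hyA
    have h3 : 0 < A.card := Finset.card_pos.mpr ⟨y, hyA⟩
    omega

lemma CPR.topChoice_split (r : LinearOrder (Option X)) (q : ℕ) (Y A : Finset X) (a0 : X)
    (hA : ∀ y, (y ∈ Y ∧ r.lt none (some y)) ↔ y ∈ insert a0 A)
    (ha0 : a0 ∉ A) (hcard : A.card = q)
    (hlt : ∀ y ∈ A, r.lt (some a0) (some y)) :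
    topChoice r q Y = A := by
  have hAsub : ∀ y ∈ A, y ∈ Y ∧ r.lt none (some y) := by
    intro y hy
    exact (hA y).mpr (Finset.mem_insert_of_mem hy)
  ext y
  simp only [topChoice, Finset.mem_filter]
  constructor
  · rintro ⟨hy, hacc, hcnt⟩
    rcases Finset.mem_insert.mp ((hA y).mp ⟨hy, hacc⟩) with rfl | hyA
    · exfalso
      have hsub : A ⊆ Y.filter (fun z => r.lt none (some z) ∧ r.lt (some y) (some z)) := by
        intro z hz
        obtain ⟨hzY, hzacc⟩ := hAsub z hz
        exact Finset.mem_filter.mpr ⟨hzY, hzacc, hlt z hz⟩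
      have := Finset.card_le_card hsub
      omega
    · exact hyA
  · intro hyA
    obtain ⟨hy, hacc⟩ := hAsub y hyA
    refine ⟨hy, hacc, ?_⟩
    have hsub : Y.filter (fun z => r.lt none (some z) ∧ r.lt (some y) (some z)) ⊆
        A.erase y := by
      intro z hz
      rw [Finset.mem_filter] at hz
      obtain ⟨hzY, hzacc, hyz⟩ := hz
      rcases Finset.mem_insert.mp ((hA z).mp ⟨hzY, hzacc⟩) with rfl | hzA
      · exact absurd (hlt y hyA) (fun h => CPR.llt_asymm r hyz h)
      · exact Finset.mem_erase.mpr ⟨fun h => CPR.llt_irrefl r (some y) (h ▸ hyz), hzA⟩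
    have h1 := Finset.card_le_card hsub
    have h2 := Finset.card_erase_of_mem hyA
    have h3 : 0 < A.card := Finset.card_pos.mpr ⟨y, hyA⟩
    omega

lemma CPR.topChoice_isChoice (r : LinearOrder (Option X)) (q : ℕ) :
    IsChoice (topChoice r q) := by
  intro Y y hy
  simp only [topChoice, Finset.mem_filter] at hy
  exact hy.1

noncomputable def CPR.tierA (Z : Finset X) (a b : X) : X → ℕ :=
  fun z => if z = a then 2 else if z = b then 3 else if z ∈ Z then 4 else 0

noncomputable def CPR.tierB (x y0 : X) : X → ℕ :=
  fun z => if z = x then 3 else if z = y0 then 2 else 0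

lemma CPR.swap_step {X : Type*} [Countable X] [Infinite X] (E : Finset X → Set X)
    (hcontr : ∀ Z : Finset X, E Z ⊆ (Z : Set X))
    (hpres : ∀ C1 C2 : Finset X → Finset X, IsChoice C1 → IsChoice C2 →
      Responsive C1 → Responsive C2 → PathIndependent (lexComp E C1 C2))
    {Z : Finset X} {x a b : X} (hx : x ∈ Z) (ha : a ∈ Z) (hxa : x ≠ a) (hb : b ∉ Z)
    (hxE : x ∉ E Z) : x ∉ E (insert b (Z.erase a)) := by
  intro hxEW
  set W : Finset X := insert b (Z.erase a) with hW
  obtain ⟨g, hg⟩ := Countable.exists_injective_nat X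
  obtain ⟨y0, hy0⟩ := Infinite.exists_notMem_finset (insert b Z)
  have hy0b : y0 ≠ b := fun h => hy0 (h ▸ Finset.mem_insert_self b Z)
  have hy0Z : y0 ∉ Z := fun h => hy0 (Finset.mem_insert_of_mem h)
  have hy0x : y0 ≠ x := fun h => hy0Z (h ▸ hx)
  have hbx : b ≠ x := fun h => hb (h ▸ hx)
  have hab : a ≠ b := fun h => hb (h ▸ ha)
  have hbea : b ∉ Z.erase a := fun h => hb (Finset.mem_of_mem_erase h)
  have hy0W : y0 ∉ W := by
    rw [hW]
    intro h
    rcases Finset.mem_insert.mp h with h | h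
    · exact hy0b h
    · exact hy0Z (Finset.mem_of_mem_erase h)
  have hn1 : 1 ≤ Z.card := Finset.card_pos.mpr ⟨x, hx⟩
  -- the two orders and responsive choice functions
  set t1 : X → ℕ := CPR.tierA Z a b with ht1
  set t2 : X → ℕ := CPR.tierB x y0 with ht2
  set r1 : LinearOrder (Option X) := CPR.tierOrd t1 g hg with hr1
  set r2 : LinearOrder (Option X) := CPR.tierOrd t2 g hg with hr2
  set C1 : Finset X → Finset X := topChoice r1 Z.card with hC1
  set C2 : Finset X → Finset X := topChoice r2 1 with hC2
  -- tier values
  have htA_a : t1 a = 2 := by simp [ht1, CPR.tierA]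
  have htA_b : t1 b = 3 := by simp [ht1, CPR.tierA, Ne.symm hab]
  have htA_Z : ∀ y ∈ Z.erase a, t1 y = 4 := by
    intro y hy
    have h1 : y ≠ a := Finset.ne_of_mem_erase hy
    have h2 : y ∈ Z := Finset.mem_of_mem_erase hy
    have h3 : y ≠ b := fun h => hb (h ▸ h2)
    simp [ht1, CPR.tierA, h1, h3, h2]
  have ht1ne : ∀ y : X, t1 y ≠ 1 := by
    intro y
    simp only [ht1, CPR.tierA]
    split_ifs <;> omega
  have ht2ne : ∀ y : X, t2 y ≠ 1 := by
    intro y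
    simp only [ht2, CPR.tierB]
    split_ifs <;> omega
  -- acceptability characterizations
  have h1acc : ∀ y : X, r1.lt none (some y) ↔ (y ∈ Z ∨ y = b) := by
    intro y
    rw [hr1, CPR.tierOrd_none_lt t1 g hg y (ht1ne y)]
    simp only [ht1, CPR.tierA]
    split_ifs with h1 h2 h3
    · simp [h1, ha]
    · simp [h2]
    · simp [h3]
    · simp [h3, h2]
  have h2acc : ∀ y : X, r2.lt none (some y) ↔ (y = x ∨ y = y0) := by
    intro y
    rw [hr2, CPR.tierOrd_none_lt t2 g hg y (ht2ne y)]
    simp only [ht2, CPR.tierB]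
    split_ifs with h1 h2
    · simp [h1]
    · simp [h2, h1]
    · simp [h1, h2]
  -- key rearrangement
  have haW : a ∉ W := by
    rw [hW]
    intro h
    rcases Finset.mem_insert.mp h with h | h
    · exact hab h
    · exact Finset.notMem_erase a Z h
  have hWcard : W.card = Z.card := by
    rw [hW, Finset.card_insert_of_notMem hbea, Finset.card_erase_of_mem ha]
    omega
  have hmemW : ∀ y : X, y ∈ insert a W ↔ (y ∈ Z ∨ y = b) := by
    intro y
    rw [hW, Finset.insert_comm, Finset.insert_erase ha, Finset.mem_insert]
    tauto
  have hltW : ∀ y ∈ W, r1.lt (some a) (some y) := by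
    intro y hy
    rcases Finset.mem_insert.mp hy with rfl | hy
    · exact CPR.tierOrd_some_lt t1 g hg (by rw [htA_a, htA_b]; omega)
    · exact CPR.tierOrd_some_lt t1 g hg (by rw [htA_a, htA_Z y hy]; omega)
  -- C1 evaluations
  have e1 : C1 (insert y0 Z) = Z := by
    rw [hC1]
    apply CPR.topChoice_under r1 Z.card _ Z _ le_rfl
    intro y
    rw [h1acc, Finset.mem_insert]
    constructor
    · intro h
      exact ⟨Or.inr h, Or.inl h⟩
    · rintro ⟨rfl | h1, h2 | h2⟩
      · exact absurd h2 hy0Z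
      · exact absurd h2 hy0b
      · exact h1
      · exact h1
  have e2 : C1 {b} = {b} := by
    rw [hC1]
    apply CPR.topChoice_under r1 Z.card _ {b} _ hn1
    intro y
    rw [h1acc, Finset.mem_singleton]
    constructor
    · rintro rfl
      exact ⟨rfl, Or.inr rfl⟩
    · rintro ⟨rfl, -⟩
      rfl
  have e3 : C1 (insert y0 (insert b Z)) = W := by
    rw [hC1]
    apply CPR.topChoice_split r1 Z.card _ W a _ haW hWcard hltW
    intro y
    rw [h1acc, hmemW, Finset.mem_insert, Finset.mem_insert]
    constructor
    · rintro ⟨rfl | h1, h2⟩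
      · rcases h2 with h2 | h2
        · exact absurd h2 hy0Z
        · exact absurd h2 hy0b
      · exact h2
    · rintro (h | h)
      · exact ⟨Or.inr (Or.inr h), Or.inl h⟩
      · exact ⟨Or.inr (Or.inl h), Or.inr h⟩
  have e4 : C1 (insert b Z) = W := by
    rw [hC1]
    apply CPR.topChoice_split r1 Z.card _ W a _ haW hWcard hltW
    intro y
    rw [h1acc, hmemW, Finset.mem_insert]
    constructor
    · rintro ⟨-, h2⟩
      exact h2
    · rintro (h | h)
      · exact ⟨Or.inr h, Or.inl h⟩
      · exact ⟨Or.inl h, Or.inr h⟩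
  -- tierB values
  have htB_x : t2 x = 3 := by simp [ht2, CPR.tierB]
  have htB_y0 : t2 y0 = 2 := by simp [ht2, CPR.tierB, hy0x]
  -- lexComp evaluations
  have hL : ∀ Y : Finset X, lexComp E C1 C2 Y = C1 Y ∪ C2 (Y.filter (fun y => y ∉ E (C1 Y))) :=
    fun Y => rfl
  -- L (insert y0 Z) = Z
  have eL1 : lexComp E C1 C2 (insert y0 Z) = Z := by
    rw [hL, e1, hC2]
    have : topChoice r2 1 ((insert y0 Z).filter (fun y => y ∉ E Z)) = {x} := by
      apply CPR.topChoice_split r2 1 _ {x} y0 _ (by simpa using hy0x) (by simp)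
      · intro y hy
        rw [Finset.mem_singleton] at hy
        subst hy
        exact CPR.tierOrd_some_lt t2 g hg (by rw [htB_x, htB_y0]; omega)
      · intro y
        rw [h2acc, Finset.mem_filter, Finset.mem_insert, Finset.mem_insert,
          Finset.mem_singleton]
        constructor
        · rintro ⟨-, rfl | rfl⟩
          · exact Or.inr rfl
          · exact Or.inl rfl
        · rintro (rfl | rfl)
          · exact ⟨⟨Or.inl rfl, fun h => hy0Z (hcontr Z h)⟩, Or.inr rfl⟩
          · exact ⟨⟨Or.inr hx, hxE⟩, Or.inl rfl⟩
    rw [this]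
    exact Finset.union_eq_left.mpr (Finset.singleton_subset_iff.mpr hx)
  -- L {b} = {b}
  have eL2 : lexComp E C1 C2 {b} = {b} := by
    rw [hL, hC2]
    have : topChoice r2 1 (({b} : Finset X).filter (fun y => y ∉ E (C1 {b}))) = ∅ := by
      apply CPR.topChoice_under r2 1 _ ∅ _ (by simp)
      intro y
      simp only [Finset.notMem_empty, false_iff, Finset.mem_filter, Finset.mem_singleton]
      rintro ⟨⟨rfl, -⟩, hacc⟩
      rcases (h2acc y).mp hacc with rfl | rfl
      · exact hbx rfl
      · exact hy0b rfl
    rw [this, e2, Finset.union_empty]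
  -- L (insert y0 (insert b Z)) = W ∪ {y0}
  have eL3 : lexComp E C1 C2 (insert y0 (insert b Z)) = W ∪ {y0} := by
    rw [hL, e3, hC2]
    have : topChoice r2 1 ((insert y0 (insert b Z)).filter (fun y => y ∉ E W)) = {y0} := by
      apply CPR.topChoice_under r2 1 _ {y0} _ le_rfl
      intro y
      rw [Finset.mem_singleton, Finset.mem_filter, Finset.mem_insert]
      constructor
      · rintro rfl
        exact ⟨⟨Or.inl rfl, fun h => hy0W (hcontr W h)⟩, (h2acc _).mpr (Or.inr rfl)⟩
      · rintro ⟨⟨-, hnE⟩, hacc⟩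
        rcases (h2acc y).mp hacc with rfl | rfl
        · exact absurd hxEW hnE
        · rfl
    rw [this]
  -- L (insert b Z) = W
  have eL4 : lexComp E C1 C2 (insert b Z) = W := by
    rw [hL, e4, hC2]
    have : topChoice r2 1 ((insert b Z).filter (fun y => y ∉ E W)) = ∅ := by
      apply CPR.topChoice_under r2 1 _ ∅ _ (by simp)
      intro y
      simp only [Finset.notMem_empty, false_iff, Finset.mem_filter, Finset.mem_insert]
      rintro ⟨⟨hy, hnE⟩, hacc⟩
      rcases (h2acc y).mp hacc with rfl | rfl
      · exact hnE hxEW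
      · rcases hy with h | h
        · exact hy0b h
        · exact hy0Z h
    rw [this, Finset.union_empty]
  -- path independence gives a contradiction
  have hRes1 : Responsive C1 := ⟨r1, Z.card, fun _ => rfl⟩
  have hRes2 : Responsive C2 := ⟨r2, 1, fun _ => rfl⟩
  have hCh1 : IsChoice C1 := CPR.topChoice_isChoice r1 Z.card
  have hCh2 : IsChoice C2 := CPR.topChoice_isChoice r2 1
  have hpi := hpres C1 C2 hCh1 hCh2 hRes1 hRes2 (insert y0 Z) {b}
  have hu1 : insert y0 Z ∪ {b} = insert y0 (insert b Z) := by
    ext y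
    simp only [Finset.mem_union, Finset.mem_insert, Finset.mem_singleton]
    tauto
  have hu2 : Z ∪ ({b} : Finset X) = insert b Z := by
    ext y
    simp only [Finset.mem_union, Finset.mem_insert, Finset.mem_singleton]
    tauto
  rw [hu1, eL3, eL1, eL2, hu2, eL4] at hpi
  have : y0 ∈ W := by
    rw [← hpi]
    exact Finset.mem_union_right _ (Finset.mem_singleton_self y0)
  exact hy0W this

lemma CPR.swap_iff {X : Type*} [Countable X] [Infinite X] (E : Finset X → Set X)
    (hcontr : ∀ Z : Finset X, E Z ⊆ (Z : Set X))
    (hpres : ∀ C1 C2 : Finset X → Finset X, IsChoice C1 → IsChoice C2 →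
      Responsive C1 → Responsive C2 → PathIndependent (lexComp E C1 C2))
    {Z : Finset X} {x a b : X} (hx : x ∈ Z) (ha : a ∈ Z) (hxa : x ≠ a) (hb : b ∉ Z) :
    (x ∈ E Z ↔ x ∈ E (insert b (Z.erase a))) := by
  have hback : x ∉ E (insert b (Z.erase a)) → x ∉ E Z := by
    intro hE
    have hx' : x ∈ insert b (Z.erase a) :=
      Finset.mem_insert_of_mem (Finset.mem_erase.mpr ⟨hxa, hx⟩)
    have hb' : b ∈ insert b (Z.erase a) := Finset.mem_insert_self _ _
    have hxb : x ≠ b := fun h => hb (h ▸ hx)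
    have ha' : a ∉ insert b (Z.erase a) := by
      intro h
      rcases Finset.mem_insert.mp h with h | h
      · exact hb (h ▸ ha)
      · exact Finset.notMem_erase a Z h
    have := CPR.swap_step E hcontr hpres hx' hb' hxb ha' hE
    rwa [Finset.erase_insert (fun h => hb (Finset.mem_of_mem_erase h)),
      Finset.insert_erase ha] at this
  constructor
  · intro h
    by_contra h'
    exact hback h' h
  · intro h
    by_contra h'
    exact (CPR.swap_step E hcontr hpres hx ha hxa hb h') h

/-- **Claim (reuse is cardinal).** If `E` is a contraction and `L_E` preserves
path independence over responsive choice functions, then `I \ E` is cardinal: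
for finite `Z, Z'` with `|Z| = |Z'|` and any `x ∈ Z ∩ Z'`,
`x ∈ Z \ E(Z)` iff `x ∈ Z' \ E(Z')`. -/
theorem contraction_preserving_pi_reuse_cardinal
    {X : Type*} [Countable X] [Infinite X] (E : Finset X → Set X)
    (hcontr : ∀ Z : Finset X, E Z ⊆ (Z : Set X))
    (hpres : ∀ C1 C2 : Finset X → Finset X, IsChoice C1 → IsChoice C2 →
      Responsive C1 → Responsive C2 → PathIndependent (lexComp E C1 C2)) :
    ∀ Z Z' : Finset X, Z.card = Z'.card → ∀ x : X, x ∈ Z → x ∈ Z' →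
      (x ∈ (Z : Set X) \ E Z ↔ x ∈ (Z' : Set X) \ E Z') := by
  have key : ∀ (k : ℕ) (x : X) (Z Z' : Finset X), (Z \ Z').card = k → Z.card = Z'.card →
      x ∈ Z → x ∈ Z' → (x ∈ E Z ↔ x ∈ E Z') := by
    intro k
    induction k with
    | zero =>
      intro x Z Z' h0 hc hx hx'
      have hsub : Z ⊆ Z' := by
        rwa [← Finset.sdiff_eq_empty_iff_subset, ← Finset.card_eq_zero]
      rw [Finset.eq_of_subset_of_card_le hsub hc.ge]
    | succ k ih =>
      intro x Z Z' hk hc hx hx'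
      obtain ⟨a, haZ⟩ := Finset.card_pos.mp (by rw [hk]; exact Nat.succ_pos k)
      have haZ1 : a ∈ Z := (Finset.mem_sdiff.mp haZ).1
      have haZ2 : a ∉ Z' := (Finset.mem_sdiff.mp haZ).2
      have hxa : x ≠ a := fun h => haZ2 (h ▸ hx')
      have hcard2 : 0 < (Z' \ Z).card := by
        have h1 := Finset.card_sdiff_add_card_inter Z Z'
        have h2 := Finset.card_sdiff_add_card_inter Z' Z
        rw [Finset.inter_comm] at h2
        omega
      obtain ⟨b, hbZ'⟩ := Finset.card_pos.mp hcard2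
      have hbZ'1 : b ∈ Z' := (Finset.mem_sdiff.mp hbZ').1
      have hbZ'2 : b ∉ Z := (Finset.mem_sdiff.mp hbZ').2
      have hswap := CPR.swap_iff E hcontr hpres hx haZ1 hxa hbZ'2
      set Z1 : Finset X := insert b (Z.erase a) with hZ1
      have hxZ1 : x ∈ Z1 :=
        Finset.mem_insert_of_mem (Finset.mem_erase.mpr ⟨hxa, hx⟩)
      have hbea : b ∉ Z.erase a := fun h => hbZ'2 (Finset.mem_of_mem_erase h)
      have hZ1card : Z1.card = Z'.card := by
        rw [hZ1, Finset.card_insert_of_notMem hbea, Finset.card_erase_of_mem haZ1]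
        have : 0 < Z.card := Finset.card_pos.mpr ⟨x, hx⟩
        omega
      have hZ1sd : (Z1 \ Z').card = k := by
        have hset : Z1 \ Z' = (Z \ Z').erase a := by
          ext y
          simp only [hZ1, Finset.mem_sdiff, Finset.mem_insert, Finset.mem_erase]
          constructor
          · rintro ⟨rfl | ⟨hne, hyZ⟩, hyZ'⟩
            · exact absurd hbZ'1 hyZ'
            · exact ⟨hne, hyZ, hyZ'⟩
          · rintro ⟨hne, hyZ, hyZ'⟩
            exact ⟨Or.inr ⟨hne, hyZ⟩, hyZ'⟩
        rw [hset, Finset.card_erase_of_mem haZ, hk]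
        omega
      exact hswap.trans (ih x Z1 Z' hZ1sd hZ1card hxZ1 hx')
  intro Z Z' hcard x hxZ hxZ'
  have h := key (Z \ Z').card x Z Z' rfl hcard hxZ hxZ'
  simp only [Set.mem_diff, Finset.mem_coe, hxZ, hxZ', true_and]
  exact not_congr h
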